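/- Let A be an integral domain and Δ ⊆ Spec(A) such that A = ⋂_{p∈Δ} A_p is a locally finite intersection. For each p ∈ Δ let ⋆_p be a finite type star operation on A_p, and let ⋆ = ∧_{p∈Δ}⋆_p be the star operation on A defined by I^⋆ = ⋂_{p∈Δ}(IA_p)^{⋆_p}. If 𝔞 is a nonzero ideal of A such that 𝔞A_p is ⋆_p-finite for each p ∈ Δ, then 𝔞 is ⋆-finite. -/

import Mathlib

open scoped nonZeroDivisors

/-- A star operation on an integral domain `A` with quotient field `K`: a map on
(nonzero) fractional ideals satisfying `A^⋆ = A`, `(xI)^⋆ = x·I^⋆`, `I ⊆ I^⋆`,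
monotonicity and idempotency. -/
structure StarOperation (A : Type*) [CommRing A] [IsDomain A]
    (K : Type*) [Field K] [Algebra A K] [IsFractionRing A K] where
  star : FractionalIdeal A⁰ K → FractionalIdeal A⁰ K
  star_one : star 1 = 1
  star_smul : ∀ (x : K), x ≠ 0 → ∀ I : FractionalIdeal A⁰ K, I ≠ 0 →
    star (FractionalIdeal.spanSingleton A⁰ x * I) = FractionalIdeal.spanSingleton A⁰ x * star I
  le_star : ∀ I : FractionalIdeal A⁰ K, I ≠ 0 → I ≤ star I
  mono : ∀ I J : FractionalIdeal A⁰ K, I ≠ 0 → I ≤ J → star I ≤ star J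
  star_idem : ∀ I : FractionalIdeal A⁰ K, I ≠ 0 → star (star I) = star I

variable {A : Type*} [CommRing A] [IsDomain A]
  {K : Type*} [Field K] [Algebra A K] [IsFractionRing A K]

/-- `⋆` is of finite type: `I^⋆` is the union of the `J^⋆` over the finitely
generated (nonzero) fractional ideals `J ⊆ I`. -/
def StarOperation.IsFiniteType (s : StarOperation A K) : Prop :=
  ∀ I : FractionalIdeal A⁰ K, I ≠ 0 → ∀ x : K, x ∈ s.star I →
    ∃ J : FractionalIdeal A⁰ K, J ≠ 0 ∧ J ≤ I ∧ (J : Submodule A K).FG ∧ x ∈ s.star J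

/-- A (nonzero, integral) ideal `I` is a `⋆`-ideal if `I^⋆ = I`. -/
def IsStarIdeal (s : StarOperation A K) (I : Ideal A) : Prop :=
  I ≠ 0 ∧ s.star ↑I = (I : FractionalIdeal A⁰ K)

/-- A (nonzero, integral) ideal `I` is `⋆`-finite if `J^⋆ = I^⋆` for some finitely
generated (nonzero) ideal `J`. -/
def IsStarFinite (s : StarOperation A K) (I : Ideal A) : Prop :=
  I ≠ 0 ∧ ∃ J : Ideal A, J ≠ 0 ∧ J.FG ∧ s.star ↑J = s.star (I : FractionalIdeal A⁰ K)

/-- An ideal of `A` is `⋆`-maximal if it is maximal among proper `⋆`-ideals. -/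
def IsStarMaximal (s : StarOperation A K) (M : Ideal A) : Prop :=
  M ≠ ⊤ ∧ IsStarIdeal s M ∧ ∀ J : Ideal A, J ≠ ⊤ → IsStarIdeal s J → M ≤ J → J = M

/-- Property (⋆-c.a.): for every pair of proper ⋆-finite ⋆-ideals `𝔞₁, 𝔞₂` containing
`𝔞`, the ideal `(𝔞₁ + 𝔞₂)^⋆` is proper. -/
def StarCA (s : StarOperation A K) (𝔞 : Ideal A) : Prop :=
  ∀ 𝔞₁ 𝔞₂ : Ideal A, 𝔞 ≤ 𝔞₁ → 𝔞 ≤ 𝔞₂ →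
    𝔞₁ ≠ ⊤ → IsStarIdeal s 𝔞₁ → IsStarFinite s 𝔞₁ →
    𝔞₂ ≠ ⊤ → IsStarIdeal s 𝔞₂ → IsStarFinite s 𝔞₂ →
    s.star ↑(𝔞₁ + 𝔞₂) ≠ 1

/-- `ℱ` is a ⋆-comaximal collection over `a`: `a` lies in every member and
`(𝔞₁ + 𝔞₂)^⋆ = A` for all distinct members. -/
def IsStarComaximalOver (s : StarOperation A K) (a : A) (F : Set (Ideal A)) : Prop :=
  (∀ I ∈ F, a ∈ I) ∧ ∀ I ∈ F, ∀ J ∈ F, I ≠ J → s.star ↑(I + J) = 1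

/-- `(Σ')^⋆_a`: the ⋆-comaximal collections over `a` of proper ⋆-finite ⋆-ideals. -/
def SigmaP (s : StarOperation A K) (a : A) : Set (Set (Ideal A)) :=
  {F | IsStarComaximalOver s a F ∧ ∀ I ∈ F, I ≠ ⊤ ∧ IsStarIdeal s I ∧ IsStarFinite s I}

/-- `Σ^⋆_a`: members of `(Σ')^⋆_a` all of whose ideals satisfy (⋆-c.a.). -/
def SigmaCA (s : StarOperation A K) (a : A) : Set (Set (Ideal A)) :=
  {F | F ∈ SigmaP s a ∧ ∀ I ∈ F, StarCA s I}

variable (A : Type*) [CommRing A] [IsDomain A]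
  (K : Type*) [Field K] [Algebra A K] [IsFractionRing A K]

/-- The localization `A_p` of `A` at a prime ideal `p`, realized as a subalgebra of the
quotient field `K` of `A`. -/
@[reducible] noncomputable def locAt (p : Ideal A) (hp : p.IsPrime) : Subalgebra A K :=
  Localization.subalgebra K (@Ideal.primeCompl A _ p hp)
    (@Ideal.primeCompl_le_nonZeroDivisors A _ _ p hp)

/-- Let `A = ⋂_{p ∈ Δ} A_p` be a locally finite intersection of localizations at primes
`p ∈ Δ`, let `⋆_p` be a finite type star operation on `A_p` for each `p ∈ Δ`, and let
`⋆ = ∧_{p∈Δ} ⋆_p` be given by `I^⋆ = ⋂_{p∈Δ} (IA_p)^{⋆_p}`. If `𝔞` is a nonzero ideal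
of `A` such that `𝔞A_p` is `⋆_p`-finite for each `p ∈ Δ`, then `𝔞` is `⋆`-finite. -/
theorem starAux {B : Type*} [CommRing B] [IsDomain B]
    {K : Type*} [Field K] [Algebra B K] [IsFractionRing B K]
    (s : StarOperation B K) (hft : s.IsFiniteType)
    {A : Type*} [CommRing A] (φ : A →+* B) (𝔞 : Ideal A)
    (hI : 𝔞.map φ ≠ 0) (hsf : IsStarFinite s (𝔞.map φ)) :
    ∃ G : Set A, G.Finite ∧ G ⊆ ↑𝔞 ∧ ∀ 𝔟 : Ideal A, Ideal.span G ≤ 𝔟 → 𝔟 ≤ 𝔞 →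
      s.star ↑(𝔟.map φ) = s.star ↑(𝔞.map φ) := by
  obtain ⟨-, J, hJ0, hJfg, hJstar⟩ := hsf
  set I : Ideal B := 𝔞.map φ with hIdef
  have hcI : (I : FractionalIdeal B⁰ K) ≠ 0 := FractionalIdeal.coeIdeal_ne_zero.2 hI
  have hcJ : (J : FractionalIdeal B⁰ K) ≠ 0 := FractionalIdeal.coeIdeal_ne_zero.2 hJ0
  obtain ⟨Y, hY⟩ := hJfg
  have hy : ∀ y : B, ∃ C : Ideal B, y ∈ Y →
      C ≠ 0 ∧ C ≤ I ∧ C.FG ∧ algebraMap B K y ∈ s.star ↑C := by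
    intro y
    by_cases hyY : y ∈ Y
    · have hyJ : algebraMap B K y ∈ (J : FractionalIdeal B⁰ K) :=
        FractionalIdeal.mem_coeIdeal_of_mem _ (hY ▸ Ideal.subset_span hyY)
      have hymem : algebraMap B K y ∈ s.star ((I : FractionalIdeal B⁰ K)) := by
        rw [← hJstar]; exact s.le_star _ hcJ hyJ
      obtain ⟨Jy, hJy0, hJyle, hJyfg, hJymem⟩ := hft _ hcI _ hymem
      obtain ⟨Cy, rfl⟩ := FractionalIdeal.le_one_iff_exists_coeIdeal.1
        (hJyle.trans FractionalIdeal.coeIdeal_le_one)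
      refine ⟨Cy, fun _ => ⟨FractionalIdeal.coeIdeal_ne_zero.1 hJy0,
        (FractionalIdeal.coeIdeal_le_coeIdeal K).1 hJyle, ?_, hJymem⟩⟩
      rw [FractionalIdeal.coe_coeIdeal] at hJyfg
      exact Submodule.fg_of_fg_map_injective (Algebra.linearMap B K)
        (IsFractionRing.injective B K) hJyfg
    · exact ⟨⊥, fun h => absurd h hyY⟩
  choose Cf hCf using hy
  set C : Ideal B := Y.sup Cf with hCdef
  have hCle : C ≤ I := Finset.sup_le fun y hy => (hCf y hy).2.1
  have hCfg : C.FG := Submodule.fg_finset_sup _ _ fun y hy => (hCf y hy).2.2.1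
  have hYne : Y.Nonempty := by
    rcases Finset.eq_empty_or_nonempty Y with h | h
    · exfalso; apply hJ0; rw [← hY, h]; simp
    · exact h
  obtain ⟨y0, hy0⟩ := hYne
  have hC0 : C ≠ 0 := by
    intro h
    apply (hCf y0 hy0).1
    have := Finset.le_sup (f := Cf) hy0
    rw [← hCdef, h] at this
    exact le_bot_iff.1 this
  have hcC : (C : FractionalIdeal B⁰ K) ≠ 0 := FractionalIdeal.coeIdeal_ne_zero.2 hC0
  have hJleC : (J : FractionalIdeal B⁰ K) ≤ s.star ↑C := by
    have hsub : ∀ y ∈ Y, algebraMap B K y ∈ s.star (C : FractionalIdeal B⁰ K) := by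
      intro y hyY
      exact s.mono _ _ (FractionalIdeal.coeIdeal_ne_zero.2 (hCf y hyY).1)
        ((FractionalIdeal.coeIdeal_le_coeIdeal K).2 (Finset.le_sup hyY)) ((hCf y hyY).2.2.2)
    have hcomap : J ≤ ((s.star ↑C : FractionalIdeal B⁰ K) : Submodule B K).comap
        (Algebra.linearMap B K) := by
      rw [← hY, Ideal.span_le]
      intro y hyY
      simpa using hsub y hyY
    intro x hx
    obtain ⟨w, hw, rfl⟩ := (FractionalIdeal.mem_coeIdeal _).1 hx
    simpa using hcomap hw
  have hstarCI : s.star ↑C = s.star ↑I := by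
    apply le_antisymm
    · exact s.mono _ _ hcC ((FractionalIdeal.coeIdeal_le_coeIdeal K).2 hCle)
    · rw [← hJstar]
      calc s.star ↑J ≤ s.star (s.star ↑C) := s.mono _ _ hcJ hJleC
        _ = s.star ↑C := s.star_idem _ hcC
  obtain ⟨Z, hZ⟩ := hCfg
  have hz : ∀ z : B, ∃ Gz : Set A, Gz.Finite ∧ Gz ⊆ ↑𝔞 ∧
      (z ∈ Z → z ∈ Ideal.span (↑φ '' Gz)) := by
    intro z
    by_cases hzZ : z ∈ Z
    · have hzI : z ∈ Submodule.span B (↑φ '' ↑𝔞) := by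
        have h1 : z ∈ I := hCle (hZ ▸ Ideal.subset_span hzZ)
        rwa [hIdef, Ideal.map, Ideal.span] at h1
      obtain ⟨T, hTsub, hTmem⟩ := Submodule.mem_span_finite_of_mem_span hzI
      have hψ : ∀ t : B, ∃ g : A, t ∈ (↑T : Set B) → g ∈ 𝔞 ∧ φ g = t := by
        intro t
        by_cases htT : t ∈ (↑T : Set B)
        · obtain ⟨g, hg, hgt⟩ := hTsub htT; exact ⟨g, fun _ => ⟨hg, hgt⟩⟩
        · exact ⟨0, fun h => absurd h htT⟩
      choose ψ hψ using hψ
      refine ⟨ψ '' ↑T, T.finite_toSet.image ψ, ?_, fun _ => ?_⟩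
      · rintro g ⟨t, htT, rfl⟩; exact (hψ t htT).1
      · refine Ideal.span_mono ?_ hTmem
        intro t htT
        exact ⟨ψ t, ⟨t, htT, rfl⟩, (hψ t htT).2⟩
    · exact ⟨∅, Set.finite_empty, by simp, fun h => absurd h hzZ⟩
  choose Gf hGf using hz
  refine ⟨⋃ z ∈ (↑Z : Set B), Gf z, Set.Finite.biUnion Z.finite_toSet (fun z _ => (hGf z).1),
    Set.iUnion₂_subset fun z _ => (hGf z).2.1, ?_⟩
  intro 𝔟 hspan h𝔟𝔞
  have hCle𝔟 : C ≤ Ideal.map φ 𝔟 := by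
    rw [← hZ, Ideal.span_le]
    intro z hzZ
    have h1 : z ∈ Ideal.span (↑φ '' Gf z) := (hGf z).2.2 hzZ
    have h2 : Ideal.span (↑φ '' Gf z) ≤ Ideal.map φ 𝔟 := by
      rw [← Ideal.map_span]
      exact Ideal.map_mono ((Ideal.span_mono (Set.subset_biUnion_of_mem hzZ)).trans hspan)
    exact h2 h1
  have h𝔟0 : ((𝔟.map φ : Ideal B) : FractionalIdeal B⁰ K) ≠ 0 :=
    FractionalIdeal.coeIdeal_ne_zero.2 (fun h => hC0 (le_bot_iff.1 (h ▸ hCle𝔟)))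
  apply le_antisymm
  · exact s.mono _ _ h𝔟0 ((FractionalIdeal.coeIdeal_le_coeIdeal K).2 (Ideal.map_mono h𝔟𝔞))
  · rw [← hstarCI]
    exact s.mono _ _ hcC ((FractionalIdeal.coeIdeal_le_coeIdeal K).2 hCle𝔟)

theorem starFinite_of_locally_starFinite
    {A : Type*} [CommRing A] [IsDomain A]
    {K : Type*} [Field K] [Algebra A K] [IsFractionRing A K]
    (Δ : Set (Ideal A)) (hΔ : ∀ p ∈ Δ, p.IsPrime)
    (hint : (⋂ (p : Ideal A), ⋂ (h : p ∈ Δ), ((locAt A K p (hΔ p h) : Subalgebra A K) : Set K))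
      = Set.range (algebraMap A K))
    (hlf : ∀ a : A, a ≠ 0 →
      {p : Ideal A | ∃ h : p ∈ Δ,
        ¬IsUnit (algebraMap A (locAt A K p (hΔ p h)) a)}.Finite)
    (star : ∀ (p : Ideal A) (hp : p.IsPrime), p ∈ Δ → StarOperation (locAt A K p hp) K)
    (hft : ∀ (p : Ideal A) (hp : p.IsPrime) (h : p ∈ Δ), (star p hp h).IsFiniteType)
    (𝔞 : Ideal A) (h𝔞 : 𝔞 ≠ 0)
    (hloc : ∀ (p : Ideal A) (hp : p.IsPrime) (h : p ∈ Δ),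
      IsStarFinite (star p hp h) (𝔞.map (algebraMap A (locAt A K p hp)))) :
    ∃ 𝔟 : Ideal A, 𝔟 ≠ 0 ∧ 𝔟.FG ∧ 𝔟 ≤ 𝔞 ∧
      (⋂ (p : Ideal A), ⋂ (h : p ∈ Δ),
          (((star p (hΔ p h) h).star
            ↑(𝔟.map (algebraMap A (locAt A K p (hΔ p h))))) : Set K)) =
      (⋂ (p : Ideal A), ⋂ (h : p ∈ Δ),
          (((star p (hΔ p h) h).star
            ↑(𝔞.map (algebraMap A (locAt A K p (hΔ p h))))) : Set K)) := by
  
  classical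
  obtain ⟨a, ha𝔞, ha0⟩ := (Submodule.ne_bot_iff 𝔞).1 h𝔞
  have key : ∀ p : Ideal A, ∃ G : Set A, G.Finite ∧ G ⊆ ↑𝔞 ∧ ∀ h : p ∈ Δ, ∀ 𝔟 : Ideal A,
      Ideal.span G ≤ 𝔟 → 𝔟 ≤ 𝔞 →
      (star p (hΔ p h) h).star ↑(𝔟.map (algebraMap A (locAt A K p (hΔ p h)))) =
      (star p (hΔ p h) h).star ↑(𝔞.map (algebraMap A (locAt A K p (hΔ p h)))) := by
    intro p
    by_cases h : p ∈ Δ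
    · obtain ⟨G, h1, h2, h3⟩ := starAux (star p (hΔ p h) h) (hft p (hΔ p h) h)
        (algebraMap A (locAt A K p (hΔ p h))) 𝔞 (hloc p (hΔ p h) h).1 (hloc p (hΔ p h) h)
      exact ⟨G, h1, h2, fun _ => h3⟩
    · exact ⟨∅, Set.finite_empty, by simp, fun h' => absurd h' h⟩
  choose G hGfin hGsub hGkey using key
  set Sbad : Set (Ideal A) := {p : Ideal A | ∃ h : p ∈ Δ,
    ¬IsUnit (algebraMap A (locAt A K p (hΔ p h)) a)} with hSbad
  set Bset : Set A := {a} ∪ ⋃ p ∈ Sbad, G p with hBset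
  have hBfin : Bset.Finite :=
    (Set.finite_singleton a).union ((hlf a ha0).biUnion fun p _ => hGfin p)
  refine ⟨Ideal.span Bset, ?_, Submodule.fg_span hBfin, ?_, ?_⟩
  · intro h
    have ha𝔟 : a ∈ Ideal.span Bset := Ideal.subset_span (Or.inl rfl)
    rw [h] at ha𝔟
    exact ha0 ((Submodule.mem_bot A).1 ha𝔟)
  · rw [Ideal.span_le]
    exact Set.union_subset (Set.singleton_subset_iff.2 ha𝔞) (Set.iUnion₂_subset fun p _ => hGsub p)
  · refine Set.iInter_congr fun p => Set.iInter_congr fun h => ?_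
    have heq : (star p (hΔ p h) h).star
        ↑((Ideal.span Bset).map (algebraMap A (locAt A K p (hΔ p h)))) =
        (star p (hΔ p h) h).star ↑(𝔞.map (algebraMap A (locAt A K p (hΔ p h)))) := by
      by_cases hu : IsUnit (algebraMap A (locAt A K p (hΔ p h)) a)
      · have h1 : (Ideal.span Bset).map (algebraMap A (locAt A K p (hΔ p h))) = ⊤ :=
          Ideal.eq_top_of_isUnit_mem _
            (Ideal.mem_map_of_mem _ (Ideal.subset_span (Or.inl rfl))) hu
        have h2 : 𝔞.map (algebraMap A (locAt A K p (hΔ p h))) = ⊤ :=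
          Ideal.eq_top_of_isUnit_mem _ (Ideal.mem_map_of_mem _ ha𝔞) hu
        rw [h1, h2]
      · have hpS : p ∈ Sbad := ⟨h, hu⟩
        refine hGkey p h _ (Ideal.span_mono ?_) ?_
        · exact (Set.subset_biUnion_of_mem hpS).trans Set.subset_union_right
        · rw [Ideal.span_le]
          exact Set.union_subset (Set.singleton_subset_iff.2 ha𝔞)
            (Set.iUnion₂_subset fun q _ => hGsub q)
    rw [heq]
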